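/- The numerator of the convergent of C₁₀ before the high water mark of HWM number 5 is recovered from only the first 10 decimal digits of C₁₀ and the known denominator: ⌊10^10 · C₁₀⌋ = 1234567891, and ⌈(490050000000 : ℝ) · (1234567891 / 10^10)⌉ = 60499999499. -/

import Mathlib

/-- `pos n` is the position in the decimal expansion of Champernowne's constant
of the last digit of the integer `n`. -/
def pos (n : ℕ) : ℕ := ∑ k ∈ Finset.Icc 1 n, (Nat.digits 10 k).length

/-- Champernowne's constant in base ten. -/
noncomputable def C₁₀ : ℝ := ∑' n : ℕ, ((n + 1 : ℕ) : ℝ) / 10 ^ pos (n + 1)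

lemma pos_succ (n : ℕ) : pos (n+1) = pos n + (Nat.digits 10 (n+1)).length := by
  unfold pos
  rw [← Finset.Ico_add_one_right_eq_Icc, Finset.sum_Ico_succ_top (by omega), Finset.Ico_add_one_right_eq_Icc]

lemma digits_len_pos (n : ℕ) : 1 ≤ (Nat.digits 10 (n+1)).length := by
  have := (Nat.digits_ne_nil_iff_ne_zero (b := 10) (n := n+1)).2 (by omega)
  cases h : Nat.digits 10 (n+1) with
  | nil => exact absurd h this
  | cons a l => simp

lemma le_pos_add (m k : ℕ) : pos m + k ≤ pos (m + k) := by
  induction k with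
  | zero => simp
  | succ k ih =>
    rw [show m + (k+1) = (m+k)+1 by ring, pos_succ]
    have := digits_len_pos (m+k)
    omega

lemma pos_le (n : ℕ) : n ≤ pos n := by
  cases n with
  | zero => simp
  | succ k =>
    have h1 : pos 1 = 1 := by simp [pos, Nat.digits_len 10 _ (by norm_num)]
    have h2 : pos 1 + k ≤ pos (k + 1) := by
      have := le_pos_add 1 k
      rwa [show 1 + k = k + 1 by omega] at this
    omega

lemma pos_eleven : pos 11 = 13 := by
  simp [pos, Finset.sum_Icc_succ_top, Nat.digits_len 10 _ (by norm_num)]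

lemma f_nonneg (n : ℕ) : 0 ≤ ((n : ℕ) : ℝ) / 10 ^ pos n := by positivity

lemma f_le (n : ℕ) : ((n : ℕ) : ℝ) / 10 ^ pos n ≤ (n : ℝ) * (1/10) ^ n := by
  rw [div_eq_mul_inv, ← inv_pow, ← one_div]
  have h : (1/10 : ℝ) ^ pos n ≤ (1/10) ^ n :=
    pow_le_pow_of_le_one (by norm_num) (by norm_num) (pos_le n)
  exact mul_le_mul_of_nonneg_left h (Nat.cast_nonneg n)

lemma summable_f : Summable (fun n : ℕ => ((n + 1 : ℕ) : ℝ) / 10 ^ pos (n + 1)) := by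
  apply Summable.of_nonneg_of_le (fun n => f_nonneg (n+1)) (fun n => f_le (n+1))
  have h : Summable (fun n : ℕ => (n : ℝ) * (1/10) ^ n) := by
    have := summable_pow_mul_geometric_of_norm_lt_one (R := ℝ) 1 (r := 1/10) (by norm_num)
    simpa using this
  exact (summable_nat_add_iff 1).2 h

lemma sum_first_ten :
    ∑ i ∈ Finset.range 10, ((i + 1 : ℕ) : ℝ) / 10 ^ pos (i + 1) = 1234567891 / 10 ^ 10 := by
  simp [Finset.sum_range_succ, pos, Finset.sum_Icc_succ_top, Nat.digits_len 10 _ (by norm_num)]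
  norm_num

lemma tail_small :
    ∑' k : ℕ, ((k + 11 : ℕ) : ℝ) / 10 ^ pos (k + 11) < 1 / 10 ^ 10 := by
  have hs1 : Summable (fun k : ℕ => (k : ℝ) * (1/10) ^ k) := by
    simpa using summable_pow_mul_geometric_of_norm_lt_one (R := ℝ) 1 (r := 1/10) (by norm_num)
  have hs2 : Summable (fun k : ℕ => (11 : ℝ) * (1/10) ^ k) :=
    (summable_geometric_of_lt_one (by norm_num) (by norm_num)).mul_left 11
  have hsg : Summable (fun k : ℕ => ((1:ℝ)/10) ^ 13 * ((k : ℝ) * (1/10) ^ k + 11 * (1/10) ^ k)) :=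
    (hs1.add hs2).mul_left _
  have hgle : ∀ k : ℕ, ((k + 11 : ℕ) : ℝ) / 10 ^ pos (k + 11)
      ≤ (1/10 : ℝ) ^ 13 * ((k : ℝ) * (1/10) ^ k + 11 * (1/10) ^ k) := by
    intro k
    have hp : 13 + k ≤ pos (k + 11) := by
      have := le_pos_add 11 k
      rw [pos_eleven, show 11 + k = k + 11 by omega] at this
      omega
    have h1 : ((k + 11 : ℕ) : ℝ) / 10 ^ pos (k + 11) ≤ ((k:ℝ) + 11) * (1/10) ^ (13 + k) := by
      rw [div_eq_mul_inv, ← inv_pow, ← one_div]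
      have h2 : (1/10 : ℝ) ^ pos (k+11) ≤ (1/10) ^ (13 + k) :=
        pow_le_pow_of_le_one (by norm_num) (by norm_num) hp
      have : ((k + 11 : ℕ) : ℝ) = (k : ℝ) + 11 := by push_cast; ring
      rw [this]
      exact mul_le_mul_of_nonneg_left h2 (by positivity)
    calc ((k + 11 : ℕ) : ℝ) / 10 ^ pos (k + 11) ≤ ((k:ℝ) + 11) * (1/10) ^ (13 + k) := h1
      _ = (1/10 : ℝ) ^ 13 * ((k : ℝ) * (1/10) ^ k + 11 * (1/10) ^ k) := by
          rw [pow_add]; ring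
  have hT : ∑' k : ℕ, ((k + 11 : ℕ) : ℝ) / 10 ^ pos (k + 11)
      ≤ ∑' k : ℕ, (1/10 : ℝ) ^ 13 * ((k : ℝ) * (1/10) ^ k + 11 * (1/10) ^ k) := by
    apply Summable.tsum_le_tsum hgle _ hsg
    · simpa [Function.comp, add_assoc] using (summable_nat_add_iff 10).2 summable_f
  have hval : ∑' k : ℕ, (1/10 : ℝ) ^ 13 * ((k : ℝ) * (1/10) ^ k + 11 * (1/10) ^ k)
      = (1/10 : ℝ) ^ 13 * ((1/10) / (1 - 1/10) ^ 2 + 11 * (1 - 1/10)⁻¹) := by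
    rw [tsum_mul_left, Summable.tsum_add hs1 hs2, tsum_coe_mul_geometric_of_norm_lt_one (by norm_num),
      tsum_mul_left, tsum_geometric_of_lt_one (by norm_num) (by norm_num)]
  calc _ ≤ _ := hT
    _ = _ := hval
    _ < 1 / 10 ^ 10 := by norm_num

lemma C₁₀_split :
    C₁₀ = 1234567891 / 10 ^ 10 + ∑' k : ℕ, ((k + 11 : ℕ) : ℝ) / 10 ^ pos (k + 11) := by
  unfold C₁₀
  rw [← summable_f.sum_add_tsum_nat_add 10, sum_first_ten]

theorem hwm5_numerator_from_ten_digits :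
    ⌊(10 : ℝ) ^ (10 : ℕ) * C₁₀⌋ = 1234567891 ∧
    ⌈(490050000000 : ℝ) * (1234567891 / 10 ^ (10 : ℕ))⌉ = 60499999499 := by
  constructor
  · have hT0 : 0 ≤ ∑' k : ℕ, ((k + 11 : ℕ) : ℝ) / 10 ^ pos (k + 11) :=
      tsum_nonneg (fun k => f_nonneg (k + 11))
    have hT1 := tail_small
    set T := ∑' k : ℕ, ((k + 11 : ℕ) : ℝ) / 10 ^ pos (k + 11) with hT
    rw [C₁₀_split, ← hT, Int.floor_eq_iff]
    constructor
    · push_cast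
      nlinarith
    · push_cast
      nlinarith
  · rw [Int.ceil_eq_iff]
    norm_num
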